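/- Let ℓ be a positive integer and z a complex number with |z| > ℓ/60. Then |∑_{r=0}^{ℓ} z^r/r!| ≤ (64|z|/ℓ)^ℓ. -/

import Mathlib

theorem stmt_4 (ℓ : ℕ) (hℓ : 0 < ℓ) (z : ℂ) (hz : (ℓ : ℝ) / 60 < ‖z‖) :
    ‖∑ r ∈ Finset.range (ℓ + 1), z ^ r / r.factorial‖
      ≤ (64 * ‖z‖ / ℓ) ^ ℓ := by
  set a := ‖z‖ with ha_def
  have hℓR : (0:ℝ) < ℓ := by exact_mod_cast hℓ
  have ha : 0 < a := lt_trans (by positivity) hz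
  have hstep1 : ‖∑ r ∈ Finset.range (ℓ + 1), z ^ r / r.factorial‖
      ≤ ∑ r ∈ Finset.range (ℓ + 1), a ^ r / r.factorial := by
    refine le_trans (norm_sum_le _ _) (le_of_eq ?_)
    refine Finset.sum_congr rfl fun r _ => ?_
    rw [norm_div, norm_pow]
    simp [ha_def]
  have hstep2 : ∀ r ∈ Finset.range (ℓ + 1),
      a ^ r / r.factorial ≤ a ^ ℓ * (60 / ℓ) ^ (ℓ - r) / r.factorial := by
    intro r hr
    have hr' : r ≤ ℓ := Nat.lt_succ_iff.mp (Finset.mem_range.mp hr)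
    have h1 : a ^ r * ((ℓ:ℝ)/60) ^ (ℓ - r) ≤ a ^ ℓ := by
      calc a ^ r * ((ℓ:ℝ)/60) ^ (ℓ - r) ≤ a ^ r * a ^ (ℓ - r) := by
            gcongr <;> first | exact le_of_lt ha | exact le_of_lt hz | positivity
        _ = a ^ ℓ := by rw [← pow_add, Nat.add_sub_cancel' hr']
    have h2 : a ^ r ≤ a ^ ℓ * (60 / ℓ) ^ (ℓ - r) := by
      have hpos : (0:ℝ) < ((ℓ:ℝ)/60) ^ (ℓ - r) := by positivity
      rw [show (60/(ℓ:ℝ)) = ((ℓ:ℝ)/60)⁻¹ from (inv_div _ _).symm, inv_pow,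
        ← div_eq_mul_inv, le_div_iff₀ hpos]
      exact h1
    gcongr
  have hexp : ∑ r ∈ Finset.range (ℓ + 1), ((ℓ:ℝ)/60) ^ r / r.factorial
      ≤ Real.exp ((ℓ:ℝ)/60) :=
    Real.sum_le_exp_of_nonneg (by positivity) _
  have hexp2 : Real.exp ((ℓ:ℝ)/60) ≤ (16/15:ℝ) ^ ℓ := by
    have h160 : Real.exp (1/60 : ℝ) ≤ 16/15 := by
      have h : (Real.exp (1/60 : ℝ)) ^ (60:ℕ) ≤ ((16:ℝ)/15) ^ (60:ℕ) := by
        rw [← Real.exp_nat_mul, show ((60:ℕ):ℝ) * (1/60:ℝ) = 1 by norm_num]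
        calc Real.exp 1 ≤ 2.7182818286 := (Real.exp_one_lt_d9).le
          _ ≤ ((16:ℝ)/15) ^ (60:ℕ) := by rw [div_pow]; norm_num
      exact le_of_pow_le_pow_left₀ (by norm_num) (by positivity) h
    calc Real.exp ((ℓ:ℝ)/60) = (Real.exp (1/60 : ℝ)) ^ ℓ := by
          rw [← Real.exp_nat_mul]; ring_nf
      _ ≤ (16/15:ℝ) ^ ℓ := pow_le_pow_left₀ (Real.exp_nonneg _) h160 ℓ
  have hfactor : ∀ r ∈ Finset.range (ℓ+1),
      a ^ ℓ * (60 / (ℓ:ℝ)) ^ (ℓ - r) / r.factorial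
      = a ^ ℓ * (60 / ℓ) ^ ℓ * (((ℓ:ℝ)/60) ^ r / r.factorial) := by
    intro r hr
    have hr' : r ≤ ℓ := Nat.lt_succ_iff.mp (Finset.mem_range.mp hr)
    have hne : (60 / (ℓ:ℝ)) ≠ 0 := by positivity
    rw [pow_sub₀ _ hne hr']
    rw [← inv_pow, inv_div]
    ring
  calc ‖∑ r ∈ Finset.range (ℓ + 1), z ^ r / r.factorial‖
      ≤ ∑ r ∈ Finset.range (ℓ + 1), a ^ r / r.factorial := hstep1
    _ ≤ ∑ r ∈ Finset.range (ℓ + 1), a ^ ℓ * (60 / ℓ) ^ (ℓ - r) / r.factorial :=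
        Finset.sum_le_sum hstep2
    _ = a ^ ℓ * (60 / ℓ) ^ ℓ * ∑ r ∈ Finset.range (ℓ + 1), ((ℓ:ℝ)/60) ^ r / r.factorial := by
        rw [Finset.mul_sum]; exact Finset.sum_congr rfl hfactor
    _ ≤ a ^ ℓ * (60 / ℓ) ^ ℓ * Real.exp ((ℓ:ℝ)/60) := by
        gcongr
    _ ≤ a ^ ℓ * (60 / ℓ) ^ ℓ * (16/15:ℝ) ^ ℓ := by
        gcongr
    _ = (64 * a / ℓ) ^ ℓ := by
        rw [← mul_pow, ← mul_pow]
        congr 1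
        field_simp
        ring
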